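/- If (1/T) sum_{t=1}^T X_t X_t' converges to a positive definite matrix Sigma, then X_T' (sum_{t=1}^T X_t X_t')^{-1} X_T -> 0. In particular ||X_T||^2/T -> 0. -/

import Mathlib

open Filter Finset Topology

private lemma smul_mat_inv {p : ℕ} (c : ℝ) (hc : c ≠ 0) (A : Matrix (Fin p) (Fin p) ℝ) :
    (c • A)⁻¹ = c⁻¹ • A⁻¹ := by
  rcases Nat.eq_zero_or_pos p with hp | hp
  · subst hp; funext i; exact i.elim0
  · rw [Matrix.inv_def, Matrix.inv_def, Matrix.det_smul, Matrix.adjugate_smul]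
    simp only [Ring.inverse_eq_inv', Fintype.card_fin, smul_smul]
    congr 1
    have hcp : c ^ p = c ^ (p - 1) * c := by
      rw [← pow_succ]; congr 1; omega
    have h1 : (c ^ (p - 1))⁻¹ * c ^ (p - 1) = 1 := inv_mul_cancel₀ (pow_ne_zero _ hc)
    rw [hcp, mul_inv, mul_inv]
    linear_combination (c⁻¹ * A.det⁻¹) * h1

set_option maxHeartbeats 1000000 in
/-- If the normalized Gram matrices `(1/T) ∑_{t≤T} X_t X_t'` converge to a
positive definite matrix `Σ`, then `X_T' (∑_{t≤T} X_t X_t')⁻¹ X_T → 0`; in particular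
`‖X_T‖²/T → 0`. -/
theorem stmt6 {p : ℕ} (X : ℕ → Fin p → ℝ) (Sig : Matrix (Fin p) (Fin p) ℝ)
    (hSig : Sig.PosDef)
    (hconv : Tendsto (fun T : ℕ =>
        ((T : ℝ))⁻¹ • ∑ t ∈ Finset.Icc 1 T, Matrix.vecMulVec (X t) (X t))
      atTop (𝓝 Sig)) :
    Tendsto (fun T : ℕ =>
        dotProduct (X T)
          ((∑ t ∈ Finset.Icc 1 T, Matrix.vecMulVec (X t) (X t))⁻¹.mulVec (X T)))
      atTop (𝓝 0) ∧
    Tendsto (fun T : ℕ => (∑ i, (X T i) ^ 2) / T) atTop (𝓝 0) := by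
  set G : ℕ → Matrix (Fin p) (Fin p) ℝ :=
    fun T => ∑ t ∈ Finset.Icc 1 T, Matrix.vecMulVec (X t) (X t) with hGdef
  -- shifted convergence
  have hshift : Tendsto (fun T : ℕ => ((T - 1 : ℕ) : ℝ)⁻¹ • G (T - 1)) atTop (𝓝 Sig) :=
    hconv.comp (tendsto_sub_atTop_nat 1)
  have hinvT : Tendsto (fun T : ℕ => ((T : ℝ))⁻¹) atTop (𝓝 0) :=
    tendsto_natCast_atTop_atTop.inv_tendsto_atTop
  have hratio : Tendsto (fun T : ℕ => ((T - 1 : ℕ) : ℝ) / T) atTop (𝓝 1) := by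
    have h1 : Tendsto (fun T : ℕ => 1 - ((T : ℝ))⁻¹) atTop (𝓝 1) := by
      simpa using tendsto_const_nhds.sub hinvT
    refine h1.congr' ?_
    filter_upwards [eventually_ge_atTop 1] with T hT
    have hT0 : (T : ℝ) ≠ 0 := by positivity
    rw [Nat.cast_sub hT]
    field_simp
    simp
  have hprev : Tendsto (fun T : ℕ => ((T : ℝ))⁻¹ • G (T - 1)) atTop (𝓝 Sig) := by
    have h := hratio.smul hshift
    rw [one_smul] at h
    refine h.congr' ?_
    filter_upwards [eventually_ge_atTop 2] with T hT
    have ha : ((T - 1 : ℕ) : ℝ) ≠ 0 := by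
      have h1 : (1 : ℕ) ≤ T - 1 := by omega
      have := (Nat.one_le_cast (α := ℝ)).mpr h1
      linarith
    rw [smul_smul]
    congr 1
    rw [div_mul_eq_mul_div, mul_inv_cancel₀ ha, one_div]
  have hvmv : Tendsto (fun T : ℕ => ((T : ℝ))⁻¹ • Matrix.vecMulVec (X T) (X T))
      atTop (𝓝 0) := by
    have h := hconv.sub hprev
    rw [sub_self] at h
    refine h.congr' ?_
    filter_upwards [eventually_ge_atTop 1] with T hT
    obtain ⟨n, rfl⟩ : ∃ n, T = n + 1 := ⟨T - 1, by omega⟩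
    have hsum : (∑ t ∈ Finset.Icc 1 (n + 1), Matrix.vecMulVec (X t) (X t))
        = G n + Matrix.vecMulVec (X (n + 1)) (X (n + 1)) := by
      simp only [hGdef]
      rw [← Finset.insert_Icc_right_eq_Icc_add_one (by omega : 1 ≤ n + 1),
        Finset.sum_insert (by intro h; rw [Finset.mem_Icc] at h; omega)]
      exact add_comm _ _
    simp only [Nat.add_sub_cancel]
    rw [hsum, smul_add, add_sub_cancel_left]
  -- diagonal entries
  have hdiag : ∀ i, Tendsto (fun T : ℕ => (X T i) ^ 2 / T) atTop (𝓝 0) := by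
    intro i
    have hc : Continuous fun M : Matrix (Fin p) (Fin p) ℝ => M i i :=
      (continuous_apply i).comp (continuous_apply i)
    have h := (hc.tendsto 0).comp hvmv
    simp only [Function.comp_def, Matrix.smul_apply, Matrix.vecMulVec_apply,
      Matrix.zero_apply, smul_eq_mul] at h
    refine h.congr ?_
    intro T
    rw [sq, div_eq_inv_mul]
  have hsumdiag : Tendsto (fun T : ℕ => (∑ i, (X T i) ^ 2) / T) atTop (𝓝 0) := by
    have h : Tendsto (fun T : ℕ => ∑ i, (X T i) ^ 2 / T) atTop (𝓝 0) := by
      have := tendsto_finset_sum (Finset.univ : Finset (Fin p))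
        (fun i _ => hdiag i)
      simpa using this
    refine h.congr fun T => ?_
    rw [Finset.sum_div]
  refine ⟨?_, hsumdiag⟩
  -- normalized vectors tend to zero
  have hv : Tendsto (fun T : ℕ => (Real.sqrt T)⁻¹ • X T) atTop (𝓝 0) := by
    rw [tendsto_pi_nhds]
    intro i
    rw [Pi.zero_apply]
    rw [tendsto_zero_iff_abs_tendsto_zero]
    have h := (Real.continuous_sqrt.tendsto 0).comp (hdiag i)
    rw [Real.sqrt_zero] at h
    refine h.congr fun T => ?_
    simp only [Function.comp_def, Pi.smul_apply, smul_eq_mul]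
    rw [Real.sqrt_div (sq_nonneg _), Real.sqrt_sq_eq_abs, abs_mul, abs_inv,
      abs_of_nonneg (Real.sqrt_nonneg _), div_eq_inv_mul]
  -- convergence of the inverse of the normalized Gram matrix
  have hdet : Sig.det ≠ 0 := hSig.det_pos.ne'
  have hdetc : Tendsto (fun T : ℕ => ((T : ℝ)⁻¹ • G T).det) atTop (𝓝 Sig.det) :=
    ((continuous_id.matrix_det).tendsto Sig).comp hconv
  have hadjc : Tendsto (fun T : ℕ => ((T : ℝ)⁻¹ • G T).adjugate) atTop (𝓝 Sig.adjugate) :=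
    ((continuous_id.matrix_adjugate).tendsto Sig).comp hconv
  have hMinv : Tendsto (fun T : ℕ => ((T : ℝ)⁻¹ • G T)⁻¹) atTop (𝓝 Sig⁻¹) := by
    have h := (hdetc.inv₀ hdet).smul hadjc
    simpa [Matrix.inv_def, Ring.inverse_eq_inv'] using h
  -- quadratic form convergence
  have hcont : Continuous (fun q : (Fin p → ℝ) × Matrix (Fin p) (Fin p) ℝ =>
      dotProduct q.1 (q.2.mulVec q.1)) :=
    continuous_fst.dotProduct (continuous_snd.matrix_mulVec continuous_fst)
  have hq : Tendsto (fun T : ℕ =>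
      dotProduct ((Real.sqrt T)⁻¹ • X T)
        ((((T : ℝ)⁻¹ • G T)⁻¹).mulVec ((Real.sqrt T)⁻¹ • X T))) atTop (𝓝 0) := by
    have h := (hcont.tendsto (0, Sig⁻¹)).comp (hv.prodMk_nhds hMinv)
    simpa only [Function.comp_def, zero_dotProduct] using h
  refine hq.congr' ?_
  filter_upwards [eventually_ge_atTop 1] with T hT
  have hT0 : (T : ℝ) ≠ 0 := by positivity
  have hTpos : (0 : ℝ) < T := by
    have := (Nat.one_le_cast (α := ℝ)).mpr hT; linarith
  have hsq : Real.sqrt T * Real.sqrt T = T := Real.mul_self_sqrt (le_of_lt hTpos)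
  have hs0 : Real.sqrt T ≠ 0 := by
    positivity
  rw [smul_mat_inv _ (inv_ne_zero hT0) (G T), inv_inv]
  rw [Matrix.smul_mulVec, Matrix.mulVec_smul, smul_dotProduct,
    dotProduct_smul, dotProduct_smul]
  simp only [smul_eq_mul]
  have : (Real.sqrt T)⁻¹ * ((T : ℝ) * ((Real.sqrt T)⁻¹ *
      dotProduct (X T) ((G T)⁻¹.mulVec (X T)))) =
      ((Real.sqrt T)⁻¹ * (Real.sqrt T)⁻¹ * (T : ℝ)) *
      dotProduct (X T) ((G T)⁻¹.mulVec (X T)) := by ring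
  rw [this, ← mul_inv, hsq, inv_mul_cancel₀ hT0, one_mul]
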